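/- Let N be a matroid on a finite ground set E with rank function r and rank k = r(E), let B be a base of N, and let z : E → [0,1] satisfy ∑_{e∈S} z_e ≤ r(S)/2 for every S ⊆ E. Let D be a random subset of E obtained by including each element e independently with probability z_e. Then ∑_{e∈B} Pr[e ∉ span(D)] ≥ k/2; explicitly, ∑_{D⊆E} (∏_{e∈D} z_e)(∏_{e∈E∖D} (1−z_e)) · |{e ∈ B : e ∉ span(D)}| ≥ k/2. -/

import Mathlib

open scoped BigOperators Classical

/-- The rank function of a matroid: `mrank M S` is the maximum cardinality of an
independent subset of `S`. -/
noncomputable def mrank {α : Type*} (M : Matroid α) (S : Set α) : ℕ :=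
  sSup {n : ℕ | ∃ I : Finset α, ↑I ⊆ S ∧ M.Indep ↑I ∧ I.card = n}

private lemma sum_prob_one {α : Type*} [DecidableEq α] (z : α → ℝ) (s : Finset α) :
    ∑ t ∈ s.powerset, (∏ e ∈ t, z e) * ∏ e ∈ s \ t, (1 - z e) = 1 := by
  rw [← Finset.prod_add]
  simp

private lemma sum_prob_card {α : Type*} [DecidableEq α] (z : α → ℝ) (s : Finset α) :
    ∑ t ∈ s.powerset, (∏ e ∈ t, z e) * (∏ e ∈ s \ t, (1 - z e)) * (t.card : ℝ)
      = ∑ e ∈ s, z e := by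
  induction s using Finset.induction_on with
  | empty => simp
  | insert a s ha ih =>
    rw [Finset.sum_powerset_insert ha]
    have h1 : ∀ t ∈ s.powerset,
        (∏ e ∈ t, z e) * (∏ e ∈ insert a s \ t, (1 - z e)) * (t.card : ℝ)
        = (1 - z a) * ((∏ e ∈ t, z e) * (∏ e ∈ s \ t, (1 - z e)) * (t.card : ℝ)) := by
      intro t ht
      rw [Finset.mem_powerset] at ht
      have hat : a ∉ t := fun h => ha (ht h)
      have : insert a s \ t = insert a (s \ t) := by
        rw [Finset.insert_sdiff_of_notMem _ hat]
      rw [this, Finset.prod_insert (by simp [ha])]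
      ring
    have h2 : ∀ t ∈ s.powerset,
        (∏ e ∈ insert a t, z e) * (∏ e ∈ insert a s \ insert a t, (1 - z e))
          * ((insert a t).card : ℝ)
        = z a * ((∏ e ∈ t, z e) * (∏ e ∈ s \ t, (1 - z e)) * (t.card : ℝ))
          + z a * ((∏ e ∈ t, z e) * (∏ e ∈ s \ t, (1 - z e))) := by
      intro t ht
      rw [Finset.mem_powerset] at ht
      have hat : a ∉ t := fun h => ha (ht h)
      have hd : insert a s \ insert a t = s \ t := by
        ext x
        simp only [Finset.mem_sdiff, Finset.mem_insert, not_or]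
        constructor
        · rintro ⟨h1 | h1, h2, h3⟩
          · exact absurd h1 h2
          · exact ⟨h1, h3⟩
        · rintro ⟨h1, h2⟩
          exact ⟨Or.inr h1, fun hx => ha (hx ▸ h1), h2⟩
      rw [hd, Finset.prod_insert hat, Finset.card_insert_of_notMem hat]
      push_cast
      ring
    rw [Finset.sum_congr rfl h1, Finset.sum_congr rfl h2, ← Finset.mul_sum,
      Finset.sum_add_distrib, ← Finset.mul_sum, ← Finset.mul_sum, ih,
      sum_prob_one z s, Finset.sum_insert ha]
    ring

private lemma indep_card_le_of_subset_closure {α : Type*} (N : Matroid α)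
    (hE : N.E = Set.univ) {I : Set α} {D : Finset α} (hI : N.Indep I)
    (hID : I ⊆ N.closure ↑D) : I.encard ≤ (D.card : ℕ∞) := by
  have hDE : (↑D : Set α) ⊆ N.E := by rw [hE]; exact Set.subset_univ _
  obtain ⟨J, hJ⟩ := N.exists_isBasis ↑D hDE
  have hJcl : N.IsBasis J (N.closure ↑D) := hJ.isBasis_closure_right
  obtain ⟨K, hK, hIK⟩ := hI.subset_isBasis_of_subset hID
  calc I.encard ≤ K.encard := Set.encard_le_encard hIK
    _ = J.encard := hK.encard_eq_encard hJcl
    _ ≤ (↑D : Set α).encard := Set.encard_le_encard hJ.subset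
    _ = (D.card : ℕ∞) := Set.encard_coe_eq_coe_finsetCard D

private lemma base_card_eq_mrank {α : Type*} [Fintype α] (N : Matroid α)
    (hE : N.E = Set.univ) (B : Finset α) (hB : N.IsBase ↑B) :
    mrank N Set.univ = B.card := by
  have hub : ∀ n ∈ {n : ℕ | ∃ I : Finset α, ↑I ⊆ (Set.univ : Set α) ∧ N.Indep ↑I ∧ I.card = n},
      n ≤ B.card := by
    rintro n ⟨I, -, hI, rfl⟩
    obtain ⟨B', hB', hIB'⟩ := hI.exists_isBase_superset
    have h1 : (↑I : Set α).encard ≤ B'.encard := Set.encard_le_encard hIB'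
    have h2 : B'.encard = (↑B : Set α).encard := hB'.encard_eq_encard_of_isBase hB
    rw [h2, Set.encard_coe_eq_coe_finsetCard, Set.encard_coe_eq_coe_finsetCard] at h1
    exact_mod_cast h1
  have hmem : B.card ∈ {n : ℕ | ∃ I : Finset α, ↑I ⊆ (Set.univ : Set α) ∧ N.Indep ↑I ∧ I.card = n} :=
    ⟨B, Set.subset_univ _, hB.indep, rfl⟩
  unfold mrank
  exact le_antisymm (csSup_le ⟨B.card, hmem⟩ hub) (le_csSup ⟨B.card, hub⟩ hmem)

theorem expected_unspanned_base_elements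
    {α : Type*} [Fintype α] (N : Matroid α) (hE : N.E = Set.univ)
    (B : Finset α) (hB : N.IsBase ↑B)
    (z : α → ℝ) (hz : ∀ e, 0 ≤ z e ∧ z e ≤ 1)
    (hzP : ∀ S : Finset α, ∑ e ∈ S, z e ≤ (mrank N ↑S : ℝ) / 2) :
    (mrank N Set.univ : ℝ) / 2 ≤
      ∑ D : Finset α, (∏ e ∈ D, z e) * (∏ e ∈ Dᶜ, (1 - z e)) *
        ((B.filter (fun e => e ∉ N.closure ↑D)).card : ℝ) := by
  classical
  set k : ℕ := mrank N Set.univ with hk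
  have hkB : k = B.card := base_card_eq_mrank N hE B hB
  -- probability is nonneg
  have hp : ∀ D : Finset α, 0 ≤ (∏ e ∈ D, z e) * (∏ e ∈ Dᶜ, (1 - z e)) := by
    intro D
    apply mul_nonneg
    · exact Finset.prod_nonneg fun e _ => (hz e).1
    · exact Finset.prod_nonneg fun e _ => by linarith [(hz e).2]
  -- pointwise bound: filter card ≥ k - |D|
  have hpt : ∀ D : Finset α,
      (k : ℝ) - (D.card : ℝ) ≤ ((B.filter (fun e => e ∉ N.closure ↑D)).card : ℝ) := by
    intro D
    have hsplit : (B.filter (fun e => e ∉ N.closure ↑D)).card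
        = B.card - (B.filter (fun e => e ∈ N.closure ↑D)).card := by
      have := Finset.card_filter_add_card_filter_not
        (s := B) (p := fun e => e ∈ N.closure ↑D)
      omega
    have hle : (B.filter (fun e => e ∈ N.closure ↑D)).card ≤ D.card := by
      have hIindep : N.Indep ↑(B.filter (fun e => e ∈ N.closure ↑D)) :=
        hB.indep.subset (by simp [Set.subset_def]; intro x hx _; exact hx)
      have hIsub : (↑(B.filter (fun e => e ∈ N.closure ↑D)) : Set α) ⊆ N.closure ↑D := by
        intro x hx
        simp only [Finset.coe_filter, Set.mem_setOf_eq] at hx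
        exact hx.2
      have := indep_card_le_of_subset_closure N hE hIindep hIsub
      rw [Set.encard_coe_eq_coe_finsetCard] at this
      exact_mod_cast this
    have hfle : (B.filter (fun e => e ∈ N.closure ↑D)).card ≤ B.card :=
      Finset.card_filter_le _ _
    rw [hsplit]
    push_cast [Nat.cast_sub hfle]
    rw [hkB]
    push_cast
    linarith [(Nat.cast_le (α := ℝ)).mpr hle]
  -- lower bound the sum
  have hsum1 : ∑ D : Finset α, (∏ e ∈ D, z e) * (∏ e ∈ Dᶜ, (1 - z e)) = 1 := by
    calc ∑ D : Finset α, (∏ e ∈ D, z e) * (∏ e ∈ Dᶜ, (1 - z e))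
        = ∑ D ∈ (Finset.univ : Finset α).powerset,
            (∏ e ∈ D, z e) * ∏ e ∈ Finset.univ \ D, (1 - z e) := by
          rw [Finset.powerset_univ]
          exact Finset.sum_congr rfl fun D _ => by rw [Finset.compl_eq_univ_sdiff]
      _ = 1 := sum_prob_one z _
  have hsumc : ∑ D : Finset α, (∏ e ∈ D, z e) * (∏ e ∈ Dᶜ, (1 - z e)) * (D.card : ℝ)
      = ∑ e, z e := by
    calc ∑ D : Finset α, (∏ e ∈ D, z e) * (∏ e ∈ Dᶜ, (1 - z e)) * (D.card : ℝ)
        = ∑ D ∈ (Finset.univ : Finset α).powerset,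
            (∏ e ∈ D, z e) * (∏ e ∈ Finset.univ \ D, (1 - z e)) * (D.card : ℝ) := by
          rw [Finset.powerset_univ]
          exact Finset.sum_congr rfl fun D _ => by rw [Finset.compl_eq_univ_sdiff]
      _ = ∑ e, z e := sum_prob_card z _
  have hstep : ∑ D : Finset α, (∏ e ∈ D, z e) * (∏ e ∈ Dᶜ, (1 - z e)) *
        ((k : ℝ) - (D.card : ℝ)) ≤
      ∑ D : Finset α, (∏ e ∈ D, z e) * (∏ e ∈ Dᶜ, (1 - z e)) *
        ((B.filter (fun e => e ∉ N.closure ↑D)).card : ℝ) := by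
    apply Finset.sum_le_sum
    intro D _
    exact mul_le_mul_of_nonneg_left (hpt D) (hp D)
  have hval : ∑ D : Finset α, (∏ e ∈ D, z e) * (∏ e ∈ Dᶜ, (1 - z e)) *
      ((k : ℝ) - (D.card : ℝ)) = (k : ℝ) - ∑ e, z e := by
    have : ∀ D : Finset α, (∏ e ∈ D, z e) * (∏ e ∈ Dᶜ, (1 - z e)) *
        ((k : ℝ) - (D.card : ℝ))
        = (k : ℝ) * ((∏ e ∈ D, z e) * (∏ e ∈ Dᶜ, (1 - z e)))
          - (∏ e ∈ D, z e) * (∏ e ∈ Dᶜ, (1 - z e)) * (D.card : ℝ) := by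
      intro D; ring
    rw [Finset.sum_congr rfl fun D _ => this D, Finset.sum_sub_distrib,
      ← Finset.mul_sum, hsum1, hsumc, mul_one]
  have hz2 : ∑ e, z e ≤ (k : ℝ) / 2 := by
    have := hzP Finset.univ
    rwa [Finset.coe_univ] at this
  linarith [hstep, hval ▸ hstep]
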